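/- arXiv:1506.00030 — 7 statements merged into one kernel-verified Lean document; each statement's English description precedes it below -/
import Mathlib

section
/- Let Θ̇⋆ > 0, m > 0, and suppose (L, φ) : [0,T) → ℝ² is a C¹ solution of L' = -τL² - (1/2)Θ̇⋆φ, φ' = -3τLφ with L(0) = 1/2, φ(0) = 2m. Then for all τ ∈ [0,T) with τ ≥ 0: L(τ) ≥ φ(τ)·(1/(4m) - (1/2)Θ̇⋆τ). -/
/-- Lower bound for `L` in the reduced (`κ = 0`) core system:
`L(τ) ≥ φ(τ)(1/(4m) - Θ̇⋆τ/2)` for `τ ≥ 0`. -/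
theorem reduced_core_L_lower_bound (Θs m T : ℝ) (hΘs : 0 < Θs) (hm : 0 < m)
    (hT : 0 < T) (L φ : ℝ → ℝ)
    (hL : ∀ τ ∈ Set.Ico (0 : ℝ) T,
      HasDerivAt L (-τ * (L τ) ^ 2 - Θs * φ τ / 2) τ)
    (hφ : ∀ τ ∈ Set.Ico (0 : ℝ) T,
      HasDerivAt φ (-3 * τ * L τ * φ τ) τ)
    (hL0 : L 0 = 1 / 2) (hφ0 : φ 0 = 2 * m) :
    ∀ τ ∈ Set.Ico (0 : ℝ) T,
      L τ ≥ φ τ * (1 / (4 * m) - Θs * τ / 2) := by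
  intro τ hτ
  obtain ⟨hτ0, hτT⟩ := hτ
  -- choose u with τ < u < T
  set u : ℝ := (τ + T) / 2 with hu
  have hτu : τ < u := by simp [hu]; linarith
  have huT : u < T := by simp [hu]; linarith
  have hu0 : 0 ≤ u := by linarith
  have hsub : Set.Icc (0:ℝ) τ ⊆ Set.Ico (0:ℝ) T := fun x hx => ⟨hx.1, lt_of_le_of_lt hx.2 hτT⟩
  have hsubu : Set.Icc (0:ℝ) u ⊆ Set.Ico (0:ℝ) T := fun x hx => ⟨hx.1, lt_of_le_of_lt hx.2 huT⟩
  -- L is continuous on [0, u]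
  have hLcont : ContinuousOn L (Set.Icc 0 u) := fun x hx =>
    ((hL x (hsubu hx)).continuousAt).continuousWithinAt
  -- clamp
  set c : ℝ → ℝ := fun s => max 0 (min s u) with hc
  have hc_cont : Continuous c := continuous_const.max (continuous_id.min continuous_const)
  have hc_mem : ∀ s, c s ∈ Set.Icc (0:ℝ) u := by
    intro s
    constructor
    · exact le_max_left _ _
    · exact max_le hu0 (min_le_right _ _)
  have hc_eq : ∀ s ∈ Set.Icc (0:ℝ) τ, c s = s := by
    intro s hs
    have : min s u = s := min_eq_left (le_trans hs.2 (le_of_lt hτu))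
    simp [hc, this, hs.1]
  set f : ℝ → ℝ := fun s => 3 * s * L (c s) with hf
  have hf_cont : Continuous f := by
    have : Continuous (fun s => L (c s)) := hLcont.comp_continuous hc_cont hc_mem
    exact (continuous_const.mul continuous_id).mul this
  set A : ℝ → ℝ := fun t => ∫ s in (0:ℝ)..t, f s with hA
  have hA_deriv : ∀ b : ℝ, HasDerivAt A (f b) b := by
    intro b
    exact intervalIntegral.integral_hasDerivAt_right (hf_cont.intervalIntegrable _ _)
      (hf_cont.stronglyMeasurableAtFilter _ _) hf_cont.continuousAt
  have hA0 : A 0 = 0 := by simp [hA]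
  -- h = φ * exp A is constant on [0, τ]
  set h : ℝ → ℝ := fun t => φ t * Real.exp (A t) with hh
  have hh_deriv : ∀ x ∈ Set.Icc (0:ℝ) τ, HasDerivAt h 0 x := by
    intro x hx
    have hx' := hsub hx
    have h1 := (hφ x hx').mul ((hA_deriv x).exp)
    have hfx : f x = 3 * x * L x := by rw [hf]; simp only; rw [hc_eq x hx]
    rw [hfx] at h1
    refine h1.congr_deriv ?_
    ring
  have hh_const : ∀ x ∈ Set.Icc (0:ℝ) τ, h x = h 0 := by
    intro x hx
    exact constant_of_has_deriv_right_zero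
      (fun y hy => (hh_deriv y hy).continuousAt.continuousWithinAt)
      (fun y hy => ((hh_deriv y (Set.mem_Icc_of_Ico hy)).hasDerivWithinAt)) x hx
  have hh0 : h 0 = 2 * m := by simp [hh, hA0, hφ0]
  have hφpos : ∀ x ∈ Set.Icc (0:ℝ) τ, 0 < φ x := by
    intro x hx
    have h1 : φ x * Real.exp (A x) = 2 * m := by rw [← hh0]; exact hh_const x hx
    have h2 : 0 < Real.exp (A x) := Real.exp_pos _
    nlinarith
  -- G = L / φ + Θs t / 2 is monotone on [0, τ]
  set G : ℝ → ℝ := fun t => L t / φ t + Θs * t / 2 with hG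
  have hG_deriv : ∀ x ∈ Set.Icc (0:ℝ) τ, HasDerivAt G (2 * x * (L x)^2 / φ x) x := by
    intro x hx
    have hx' := hsub hx
    have hpx := hφpos x hx
    have h1 := ((hL x hx').div (hφ x hx') (ne_of_gt hpx)).add
      (((hasDerivAt_id x).const_mul Θs).div_const 2)
    refine h1.congr_deriv ?_
    field_simp
    ring
  have hmono : MonotoneOn G (Set.Icc 0 τ) := by
    apply monotoneOn_of_deriv_nonneg (convex_Icc 0 τ)
    · exact fun x hx => (hG_deriv x hx).continuousAt.continuousWithinAt
    · intro x hx
      rw [interior_Icc] at hx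
      exact (hG_deriv x (Set.mem_Icc_of_Ioo hx)).differentiableAt.differentiableWithinAt
    · intro x hx
      rw [interior_Icc] at hx
      rw [(hG_deriv x (Set.mem_Icc_of_Ioo hx)).deriv]
      have hp := hφpos x (Set.mem_Icc_of_Ioo hx)
      have hx0 : (0:ℝ) ≤ x := le_of_lt hx.1
      apply div_nonneg _ (le_of_lt hp)
      positivity
  have hGle : G 0 ≤ G τ := hmono (Set.left_mem_Icc.mpr hτ0) (Set.right_mem_Icc.mpr hτ0) hτ0
  have hG0 : G 0 = 1 / (4 * m) := by
    rw [hG]; simp [hL0, hφ0]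
    field_simp
    ring
  have hpτ := hφpos τ (Set.right_mem_Icc.mpr hτ0)
  rw [hG0, hG] at hGle
  simp only at hGle
  have h3 : (1 / (4 * m) - Θs * τ / 2) ≤ L τ / φ τ := by linarith
  have h4 := (le_div_iff₀ hpτ).mp h3
  linarith [h4, mul_comm (φ τ) (1 / (4 * m) - Θs * τ / 2)]
end

section
/- Let Θ̇⋆ > 0, m > 0, and suppose (L, φ) : [0,T) → ℝ² is a C¹ solution of L' = -τL² - (1/2)Θ̇⋆φ, φ' = -3τLφ with L(0) = 1/2, φ(0) = 2m, and suppose L(τ) > 0 on [0,T). Then L(τ) ≤ 2/(τ² + 4) for all τ ∈ [0,T). -/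
open Set

/-- Upper bound for `L` in the reduced (`κ = 0`) core system:
if `L > 0` on `[0,T)` then `L(τ) ≤ 2/(τ² + 4)`. -/
theorem reduced_core_L_upper_bound (Θs m T : ℝ) (hΘs : 0 < Θs) (hm : 0 < m)
    (hT : 0 < T) (L φ : ℝ → ℝ)
    (hL : ∀ τ ∈ Set.Ico (0 : ℝ) T,
      HasDerivAt L (-τ * (L τ) ^ 2 - Θs * φ τ / 2) τ)
    (hφ : ∀ τ ∈ Set.Ico (0 : ℝ) T,
      HasDerivAt φ (-3 * τ * L τ * φ τ) τ)
    (hL0 : L 0 = 1 / 2) (hφ0 : φ 0 = 2 * m)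
    (hLpos : ∀ τ ∈ Set.Ico (0 : ℝ) T, 0 < L τ) :
    ∀ τ ∈ Set.Ico (0 : ℝ) T, L τ ≤ 2 / (τ ^ 2 + 4) := by
  have hLc : ∀ τ ∈ Set.Ico (0 : ℝ) T, ContinuousAt L τ :=
    fun τ hτ => (hL τ hτ).continuousAt
  have hφc : ∀ τ ∈ Set.Ico (0 : ℝ) T, ContinuousAt φ τ :=
    fun τ hτ => (hφ τ hτ).continuousAt
  -- Step 1: φ is nonnegative on [0, T)
  have hφnn : ∀ τ ∈ Set.Ico (0 : ℝ) T, 0 ≤ φ τ := by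
    intro t1 ht1
    by_contra hneg
    push_neg at hneg
    have ht1pos : 0 < t1 := by
      rcases eq_or_lt_of_le ht1.1 with h | h
      · exfalso; rw [← h, hφ0] at hneg; linarith
      · exact h
    have hsub : Icc (0 : ℝ) t1 ⊆ Ico 0 T := Icc_subset_Ico_right ht1.2
    have hφcont : ContinuousOn φ (Icc 0 t1) :=
      fun x hx => (hφc x (hsub hx)).continuousWithinAt
    -- there is a zero of φ in [0, t1]
    have h0mem : (0 : ℝ) ∈ Icc (φ t1) (φ 0) := by
      constructor
      · exact hneg.le
      · rw [hφ0]; positivity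
    obtain ⟨t0, ht0mem, ht0⟩ := intermediate_value_Icc' ht1pos.le hφcont h0mem
    -- bound on the coefficient 3 x L x on [0, t1]
    have hcoef : ContinuousOn (fun x : ℝ => 3 * x * L x) (Icc 0 t1) := by
      apply ContinuousOn.mul
      · exact (continuous_const.mul continuous_id).continuousOn
      · exact fun x hx => (hLc x (hsub hx)).continuousWithinAt
    obtain ⟨C, hC⟩ := isCompact_Icc.exists_bound_of_continuousOn hcoef
    -- Grönwall from the zero t0 forward to t1
    have hgron := norm_le_gronwallBound_of_norm_deriv_right_le
      (f := φ) (f' := fun x => -3 * x * L x * φ x) (δ := 0) (K := C) (ε := 0)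
      (a := t0) (b := t1)
      (fun x hx => (hφc x (hsub ⟨le_trans ht0mem.1 hx.1, hx.2⟩)).continuousWithinAt)
      (fun x hx => (hφ x (hsub ⟨le_trans ht0mem.1 hx.1, hx.2.le⟩)).hasDerivWithinAt)
      (by rw [ht0]; simp)
      (fun x hx => by
        have hb := hC x ⟨le_trans ht0mem.1 hx.1, hx.2.le⟩
        have : ‖-3 * x * L x * φ x‖ = ‖3 * x * L x‖ * ‖φ x‖ := by
          rw [show -3 * x * L x * φ x = -(3 * x * L x * φ x) by ring, norm_neg,
            norm_mul]
        rw [this, add_zero]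
        exact mul_le_mul_of_nonneg_right hb (norm_nonneg _))
    have := hgron t1 ⟨ht0mem.2, le_rfl⟩
    rw [gronwallBound_ε0_δ0] at this
    have : φ t1 = 0 := by
      have := norm_le_zero_iff.mp this; exact this
    linarith
  -- Step 2: 1/L - τ²/2 is monotone
  intro τ0 hτ0
  rcases eq_or_lt_of_le hτ0.1 with h0 | h0
  · rw [← h0, hL0]; norm_num
  · have hsub : Icc (0 : ℝ) τ0 ⊆ Ico 0 T := Icc_subset_Ico_right hτ0.2
    set ψ : ℝ → ℝ := fun τ => (L τ)⁻¹ - τ ^ 2 / 2 with hψ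
    have hψd : ∀ τ ∈ Ico (0 : ℝ) T,
        HasDerivAt ψ (Θs * φ τ / 2 / (L τ) ^ 2) τ := by
      intro τ hτ
      have hLτ := hLpos τ hτ
      have h1 : HasDerivAt (fun t => (L t)⁻¹)
          (-(-τ * (L τ) ^ 2 - Θs * φ τ / 2) / (L τ) ^ 2) τ :=
        (hL τ hτ).inv hLτ.ne'
      have h2 : HasDerivAt (fun t : ℝ => t ^ 2 / 2) τ τ := by
        have := (hasDerivAt_pow 2 τ).div_const 2
        simpa using this
      have := h1.sub h2
      convert this using 1
      · rfl
      · rfl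
      · rfl
      field_simp
      ring
    have hmono : MonotoneOn ψ (Icc 0 τ0) := by
      apply monotoneOn_of_deriv_nonneg (convex_Icc 0 τ0)
      · exact fun x hx => ((hψd x (hsub hx)).continuousAt).continuousWithinAt
      · intro x hx
        rw [interior_Icc] at hx
        exact ((hψd x (hsub (Ioo_subset_Icc_self hx))).differentiableAt).differentiableWithinAt
      · intro x hx
        rw [interior_Icc] at hx
        have hx' := hsub (Ioo_subset_Icc_self hx)
        rw [(hψd x hx').deriv]
        have := hφnn x hx'
        have := hLpos x hx'
        positivity
    have hkey := hmono (left_mem_Icc.mpr h0.le) (right_mem_Icc.mpr h0.le) h0.le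
    have hψ0 : ψ 0 = 2 := by simp [hψ, hL0]
    have hLτ0 := hLpos τ0 hτ0
    have hinv : (τ0 ^ 2 + 4) / 2 ≤ (L τ0)⁻¹ := by
      have : ψ τ0 = (L τ0)⁻¹ - τ0 ^ 2 / 2 := rfl
      rw [hψ0, this] at hkey
      linarith
    rw [le_div_iff₀ (by positivity)]
    have hmul : L τ0 * ((τ0 ^ 2 + 4) / 2) ≤ L τ0 * (L τ0)⁻¹ :=
      mul_le_mul_of_nonneg_left hinv hLτ0.le
    rw [mul_inv_cancel₀ hLτ0.ne'] at hmul
    nlinarith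
end

section
/- Let Θ̇⋆ > 0, m > 0, and suppose (L, φ) solves L' = -τL² - (1/2)Θ̇⋆φ, φ' = -3τLφ with L(0) = 1/2, φ(0) = 2m on [0,T). Then for 0 ≤ τ < min(T, (Θ̇⋆m)^{-1/3}), φ(τ) ≤ 2m/(1 - Θ̇⋆mτ³). In particular φ is bounded on [0, 1/(2(Θ̇⋆m)^{1/3})] ∩ [0,T). -/
open Set

private lemma mono_aux {f f' : ℝ → ℝ} {a b : ℝ} (hab : a ≤ b)
    (hd : ∀ x ∈ Set.Icc a b, HasDerivAt f (f' x) x)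
    (h0 : ∀ x ∈ Set.Ioo a b, 0 ≤ f' x) : f a ≤ f b := by
  have hmono : MonotoneOn f (Set.Icc a b) := by
    apply monotoneOn_of_deriv_nonneg (convex_Icc a b)
    · exact fun x hx => (hd x hx).continuousAt.continuousWithinAt
    · intro x hx
      rw [interior_Icc] at hx
      exact ((hd x (Set.mem_Icc_of_Ioo hx)).differentiableAt).differentiableWithinAt
    · intro x hx
      rw [interior_Icc] at hx
      rw [(hd x (Set.mem_Icc_of_Ioo hx)).deriv]
      exact h0 x hx
  exact hmono (Set.left_mem_Icc.2 hab) (Set.right_mem_Icc.2 hab) hab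

private lemma bound_aux {L : ℝ → ℝ} {t₁ : ℝ} (ht₁ : 0 ≤ t₁)
    (hc : ContinuousOn L (Set.Icc 0 t₁)) :
    ∃ K : ℝ, 0 ≤ K ∧ ∀ t ∈ Set.Icc (0:ℝ) t₁, |3 * t * L t| ≤ K := by
  obtain ⟨C, hC⟩ := (isCompact_Icc (a := (0:ℝ)) (b := t₁)).exists_bound_of_continuousOn
    (f := fun t => 3 * t * L t)
    (by
      apply ContinuousOn.mul _ hc
      exact (continuous_const.mul continuous_id).continuousOn)
  refine ⟨max C 0, le_max_right _ _, fun t ht => ?_⟩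
  exact le_trans (hC t ht) (le_max_left _ _)

private lemma phi_pos (Θs m T : ℝ) (hm : 0 < m) (L φ : ℝ → ℝ)
    (hL : ∀ τ ∈ Set.Ico (0 : ℝ) T,
      HasDerivAt L (-τ * (L τ) ^ 2 - Θs * φ τ / 2) τ)
    (hφ : ∀ τ ∈ Set.Ico (0 : ℝ) T,
      HasDerivAt φ (-3 * τ * L τ * φ τ) τ)
    (hφ0 : φ 0 = 2 * m) :
    ∀ t, 0 ≤ t → t < T → 0 < φ t := by
  intro t₁ ht₁0 ht₁T
  by_contra hneg
  push_neg at hneg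
  have hcφ : ContinuousOn φ (Set.Icc 0 t₁) := fun t ht =>
    ((hφ t ⟨ht.1, lt_of_le_of_lt ht.2 ht₁T⟩).continuousAt).continuousWithinAt
  set S : Set ℝ := Set.Icc 0 t₁ ∩ φ ⁻¹' (Set.Iic 0) with hS
  have hSne : t₁ ∈ S := ⟨Set.right_mem_Icc.2 ht₁0, hneg⟩
  have hSclosed : IsClosed S :=
    hcφ.preimage_isClosed_of_isClosed isClosed_Icc isClosed_Iic
  have hSbdd : BddBelow S := ⟨0, fun t ht => ht.1.1⟩
  set t₀ := sInf S with ht₀def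
  have ht₀S : t₀ ∈ S := hSclosed.csInf_mem ⟨t₁, hSne⟩ hSbdd
  have ht₀0 : 0 ≤ t₀ := ht₀S.1.1
  have ht₀t₁ : t₀ ≤ t₁ := ht₀S.1.2
  have ht₀φ : φ t₀ ≤ 0 := ht₀S.2
  have hbefore : ∀ t, 0 ≤ t → t < t₀ → 0 < φ t := by
    intro t ht0 htt₀
    by_contra hn
    push_neg at hn
    have : t ∈ S := ⟨⟨ht0, le_trans htt₀.le ht₀t₁⟩, hn⟩
    exact absurd (csInf_le hSbdd this) (not_le.2 htt₀)
  have hcL : ContinuousOn L (Set.Icc 0 t₀) := fun t ht =>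
    ((hL t ⟨ht.1, lt_of_le_of_lt (le_trans ht.2 ht₀t₁) ht₁T⟩).continuousAt).continuousWithinAt
  obtain ⟨K, hK0, hK⟩ := bound_aux ht₀0 hcL
  have hmono : φ 0 * Real.exp (K * 0) ≤ φ t₀ * Real.exp (K * t₀) := by
    apply mono_aux ht₀0 (f := fun t => φ t * Real.exp (K * t)) (f' := fun t =>
      (-3 * t * L t * φ t) * Real.exp (K * t) + φ t * (Real.exp (K * t) * K))
    · intro t ht
      have htT : t ∈ Set.Ico (0:ℝ) T := ⟨ht.1, lt_of_le_of_lt (le_trans ht.2 ht₀t₁) ht₁T⟩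
      have hlin : HasDerivAt (fun t : ℝ => K * t) K t := by
        simpa using (hasDerivAt_id t).const_mul K
      have hexp : HasDerivAt (fun t => Real.exp (K * t)) (Real.exp (K * t) * K) t := hlin.exp
      exact (hφ t htT).mul hexp
    · intro t ht
      have hφpos : 0 < φ t := hbefore t ht.1.le ht.2
      have habs := hK t ⟨ht.1.le, ht.2.le⟩
      rw [abs_le] at habs
      have key : 0 ≤ ((-3 * t * L t + K) * φ t) * Real.exp (K * t) := by
        apply mul_nonneg (mul_nonneg (by linarith [habs.2]) hφpos.le) (Real.exp_pos _).le
      nlinarith [key]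
  rw [hφ0] at hmono
  nlinarith [Real.exp_pos (K * t₀), Real.exp_pos (K * 0), hmono,
    mul_nonpos_of_nonpos_of_nonneg ht₀φ (Real.exp_pos (K * t₀)).le]

private lemma h_nonneg (Θs m T : ℝ) (hΘs : 0 < Θs) (hm : 0 < m) (L φ : ℝ → ℝ)
    (hL : ∀ τ ∈ Set.Ico (0 : ℝ) T,
      HasDerivAt L (-τ * (L τ) ^ 2 - Θs * φ τ / 2) τ)
    (hφ : ∀ τ ∈ Set.Ico (0 : ℝ) T,
      HasDerivAt φ (-3 * τ * L τ * φ τ) τ)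
    (hL0 : L 0 = 1 / 2) (hφ0 : φ 0 = 2 * m) :
    ∀ t, 0 ≤ t → t < T →
      0 ≤ L t - φ t * (1 / (4 * m) - Θs * t / 2) := by
  set h : ℝ → ℝ := fun t => L t - φ t * (1 / (4 * m) - Θs * t / 2) with hhdef
  have hh0 : h 0 = 0 := by
    simp only [hhdef, hL0, hφ0]
    field_simp
    ring
  have hd : ∀ t ∈ Set.Ico (0:ℝ) T,
      HasDerivAt h (2 * t * (L t) ^ 2 - 3 * t * L t * h t) t := by
    intro t htT
    have hc : HasDerivAt (fun t : ℝ => 1 / (4 * m) - Θs * t / 2) (-(Θs / 2)) t := by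
      have h1 : HasDerivAt (fun t : ℝ => Θs * t / 2) (Θs / 2) t := by
        simpa using ((hasDerivAt_id t).const_mul Θs).div_const 2
      exact h1.const_sub (1 / (4 * m))
    have this : HasDerivAt h _ t := (hL t htT).sub ((hφ t htT).mul hc)
    convert this using 1
    simp only [hhdef]
    ring
  intro t₁ ht₁0 ht₁T
  by_contra hneg
  push_neg at hneg
  have hch : ContinuousOn h (Set.Icc 0 t₁) := fun t ht =>
    ((hd t ⟨ht.1, lt_of_le_of_lt ht.2 ht₁T⟩).continuousAt).continuousWithinAt
  set S : Set ℝ := Set.Icc 0 t₁ ∩ h ⁻¹' (Set.Ici 0) with hSdef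
  have hS0 : (0:ℝ) ∈ S := ⟨Set.left_mem_Icc.2 ht₁0, by simp [hh0]⟩
  have hSclosed : IsClosed S := hch.preimage_isClosed_of_isClosed isClosed_Icc isClosed_Ici
  have hSbdd : BddAbove S := ⟨t₁, fun t ht => ht.1.2⟩
  set t₀ := sSup S with ht₀def
  have ht₀S : t₀ ∈ S := hSclosed.csSup_mem ⟨0, hS0⟩ hSbdd
  have ht₀0 : 0 ≤ t₀ := ht₀S.1.1
  have ht₀t₁ : t₀ ≤ t₁ := ht₀S.1.2
  have ht₀h : 0 ≤ h t₀ := ht₀S.2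
  have hafter : ∀ t, t₀ < t → t ≤ t₁ → h t < 0 := by
    intro t ht₀t htt₁
    by_contra hn
    push_neg at hn
    have : t ∈ S := ⟨⟨le_trans ht₀0 ht₀t.le, htt₁⟩, hn⟩
    exact absurd (le_csSup hSbdd this) (not_le.2 ht₀t)
  have hcL : ContinuousOn L (Set.Icc 0 t₁) := fun t ht =>
    ((hL t ⟨ht.1, lt_of_le_of_lt ht.2 ht₁T⟩).continuousAt).continuousWithinAt
  obtain ⟨K, hK0, hK⟩ := bound_aux ht₁0 hcL
  have ht₀lt : t₀ < t₁ := by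
    rcases lt_or_eq_of_le ht₀t₁ with h' | h'
    · exact h'
    · exact absurd ht₀h (not_le.2 (h' ▸ hneg))
  have hmono : h t₀ * Real.exp (-K * t₀) ≤ h t₁ * Real.exp (-K * t₁) := by
    apply mono_aux ht₀lt.le (f := fun t => h t * Real.exp (-K * t)) (f' := fun t =>
      (2 * t * (L t) ^ 2 - 3 * t * L t * h t) * Real.exp (-K * t)
        + h t * (Real.exp (-K * t) * (-K)))
    · intro t ht
      have htT : t ∈ Set.Ico (0:ℝ) T :=
        ⟨le_trans ht₀0 ht.1, lt_of_le_of_lt ht.2 ht₁T⟩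
      have hlin : HasDerivAt (fun t : ℝ => -K * t) (-K) t := by
        simpa using (hasDerivAt_id t).const_mul (-K)
      have hexp : HasDerivAt (fun t => Real.exp (-K * t)) (Real.exp (-K * t) * (-K)) t := hlin.exp
      exact (hd t htT).mul hexp
    · intro t ht
      have ht0 : 0 ≤ t := le_trans ht₀0 ht.1.le
      have hhneg : h t < 0 := hafter t ht.1 ht.2.le
      have habs := hK t ⟨ht0, ht.2.le⟩
      rw [abs_le] at habs
      have key1 : 0 ≤ ((3 * t * L t + K) * (-h t)) * Real.exp (-K * t) := by
        apply mul_nonneg (mul_nonneg (by linarith [habs.1]) (by linarith)) (Real.exp_pos _).le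
      have key2 : 0 ≤ (2 * t * (L t) ^ 2) * Real.exp (-K * t) := by
        apply mul_nonneg (by positivity) (Real.exp_pos _).le
      nlinarith [key1, key2]
  have hneg' : h t₁ < 0 := hneg
  nlinarith [Real.exp_pos (-K * t₀), Real.exp_pos (-K * t₁), hmono,
    mul_nonneg ht₀h (Real.exp_pos (-K * t₀)).le,
    mul_neg_of_neg_of_pos hneg' (Real.exp_pos (-K * t₁))]

/-- Upper bound for `φ` in the reduced (`κ = 0`) core system:
for `0 ≤ τ < min(T, (Θ̇⋆m)^{-1/3})` one has `φ(τ) ≤ 2m/(1 - Θ̇⋆ m τ³)`;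
in particular `φ` is bounded on `[0, 1/(2(Θ̇⋆m)^{1/3})] ∩ [0,T)`. -/
theorem reduced_core_phi_bounded (Θs m T : ℝ) (hΘs : 0 < Θs) (hm : 0 < m)
    (hT : 0 < T) (L φ : ℝ → ℝ)
    (hL : ∀ τ ∈ Set.Ico (0 : ℝ) T,
      HasDerivAt L (-τ * (L τ) ^ 2 - Θs * φ τ / 2) τ)
    (hφ : ∀ τ ∈ Set.Ico (0 : ℝ) T,
      HasDerivAt φ (-3 * τ * L τ * φ τ) τ)
    (hL0 : L 0 = 1 / 2) (hφ0 : φ 0 = 2 * m) :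
    (∀ τ : ℝ, 0 ≤ τ → τ < T → τ < (Θs * m) ^ (-(1 : ℝ) / 3) →
        φ τ ≤ 2 * m / (1 - Θs * m * τ ^ 3)) ∧
      ∃ C : ℝ, ∀ τ ∈ Set.Icc (0 : ℝ) (1 / (2 * (Θs * m) ^ ((1 : ℝ) / 3))),
        τ < T → φ τ ≤ C := by
  have hP := phi_pos Θs m T hm L φ hL hφ hφ0
  have hH := h_nonneg Θs m T hΘs hm L φ hL hφ hL0 hφ0
  -- lower bound on L
  have hLlb : ∀ t, 0 ≤ t → t < T → -(Θs / 2) * t * φ t ≤ L t := by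
    intro t ht0 htT
    have h1 := hH t ht0 htT
    have h2 := (hP t ht0 htT).le
    nlinarith [mul_nonneg h2 (by positivity : (0:ℝ) ≤ 1 / (4 * m))]
  -- the inverse bound
  have hW : ∀ τ, 0 ≤ τ → τ < T →
      (2 * m)⁻¹ ≤ (φ τ)⁻¹ + Θs / 2 * τ ^ 3 := by
    intro τ hτ0 hτT
    have hmono : (φ 0)⁻¹ + Θs / 2 * (0:ℝ) ^ 3 ≤ (φ τ)⁻¹ + Θs / 2 * τ ^ 3 := by
      apply mono_aux hτ0 (f := fun t => (φ t)⁻¹ + Θs / 2 * t ^ 3) (f' := fun t =>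
        -(-3 * t * L t * φ t) / (φ t) ^ 2 + Θs / 2 * (3 * t ^ 2))
      · intro t ht
        have htT : t ∈ Set.Ico (0:ℝ) T := ⟨ht.1, lt_of_le_of_lt ht.2 hτT⟩
        have hφpos := hP t ht.1 htT.2
        have h1 : HasDerivAt (fun t => (φ t)⁻¹) (-(-3 * t * L t * φ t) / (φ t) ^ 2) t :=
          (hφ t htT).inv hφpos.ne'
        have h2 : HasDerivAt (fun t : ℝ => Θs / 2 * t ^ 3) (Θs / 2 * (3 * t ^ 2)) t := by
          simpa using (hasDerivAt_pow 3 t).const_mul (Θs / 2)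
        exact h1.add h2
      · intro t ht
        have ht0 : 0 ≤ t := ht.1.le
        have htT : t < T := lt_trans ht.2 hτT
        have hφpos := hP t ht0 htT
        have hLlb' := hLlb t ht0 htT
        have key : 0 ≤ 3 * t * L t * φ t + Θs / 2 * (3 * t ^ 2) * (φ t) ^ 2 := by
          nlinarith [mul_nonneg (mul_nonneg (by linarith : (0:ℝ) ≤ 3 * t) hφpos.le)
            (by linarith : 0 ≤ L t + Θs / 2 * t * φ t)]
        rw [div_add' _ _ _ (pow_ne_zero 2 hφpos.ne')]
        apply div_nonneg _ (sq_nonneg (φ t))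
        nlinarith [key]
    simpa [hφ0] using hmono
  constructor
  · intro τ hτ0 hτT hτpow
    have hφpos := hP τ hτ0 hτT
    have hΘm : 0 < Θs * m := mul_pos hΘs hm
    have hD : 0 < 1 - Θs * m * τ ^ 3 := by
      have hb : τ ^ 3 < ((Θs * m) ^ (-(1:ℝ) / 3)) ^ 3 :=
        pow_lt_pow_left₀ hτpow hτ0 three_ne_zero
      have hc : ((Θs * m) ^ (-(1:ℝ) / 3)) ^ (3:ℕ) = (Θs * m)⁻¹ := by
        rw [← Real.rpow_natCast ((Θs * m) ^ (-(1:ℝ) / 3)) 3, ← Real.rpow_mul hΘm.le]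
        norm_num [Real.rpow_neg_one]
      rw [hc] at hb
      have := mul_lt_mul_of_pos_left hb hΘm
      rw [mul_inv_cancel₀ hΘm.ne'] at this
      linarith
    have hw := hW τ hτ0 hτT
    rw [le_div_iff₀ hD]
    have big := mul_le_mul_of_nonneg_left hw
      (show (0:ℝ) ≤ φ τ * (2 * m) by positivity)
    have e1 : φ τ * (2 * m) * (2 * m)⁻¹ = φ τ := by field_simp
    have e2 : φ τ * (2 * m) * ((φ τ)⁻¹ + Θs / 2 * τ ^ 3)
        = 2 * m + φ τ * (2 * m) * (Θs / 2 * τ ^ 3) := by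
      field_simp
    rw [e1, e2] at big
    nlinarith [big]
  · refine ⟨16 * m / 7, fun τ hτmem hτT => ?_⟩
    have hτ0 : 0 ≤ τ := hτmem.1
    have hΘm : 0 < Θs * m := mul_pos hΘs hm
    set x := (Θs * m) ^ ((1:ℝ) / 3) with hxdef
    have hx : 0 < x := Real.rpow_pos_of_pos hΘm _
    have hx3 : x ^ (3:ℕ) = Θs * m := by
      rw [hxdef, ← Real.rpow_natCast ((Θs * m) ^ ((1:ℝ) / 3)) 3, ← Real.rpow_mul hΘm.le]
      norm_num
    have hinv : (Θs * m) ^ (-(1:ℝ) / 3) = x⁻¹ := by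
      rw [hxdef, ← Real.rpow_neg_one x, hxdef, ← Real.rpow_mul hΘm.le]
      norm_num
    have hτle : τ ≤ 1 / (2 * x) := hτmem.2
    have hτlt : τ < (Θs * m) ^ (-(1:ℝ) / 3) := by
      rw [hinv]
      have : 1 / (2 * x) < x⁻¹ := by
        rw [one_div, inv_lt_inv₀ (by positivity) hx]
        linarith
      linarith
    have hmain : φ τ ≤ 2 * m / (1 - Θs * m * τ ^ 3) := by
      -- reuse part 1 logic
      have hφpos := hP τ hτ0 hτT
      have hD : 0 < 1 - Θs * m * τ ^ 3 := by
        have hb : τ ^ 3 < ((Θs * m) ^ (-(1:ℝ) / 3)) ^ 3 :=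
          pow_lt_pow_left₀ hτlt hτ0 three_ne_zero
        have hc : ((Θs * m) ^ (-(1:ℝ) / 3)) ^ (3:ℕ) = (Θs * m)⁻¹ := by
          rw [← Real.rpow_natCast ((Θs * m) ^ (-(1:ℝ) / 3)) 3, ← Real.rpow_mul hΘm.le]
          norm_num [Real.rpow_neg_one]
        rw [hc] at hb
        have := mul_lt_mul_of_pos_left hb hΘm
        rw [mul_inv_cancel₀ hΘm.ne'] at this
        linarith
      have hw := hW τ hτ0 hτT
      rw [le_div_iff₀ hD]
      have big := mul_le_mul_of_nonneg_left hw
        (show (0:ℝ) ≤ φ τ * (2 * m) by positivity)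
      have e1 : φ τ * (2 * m) * (2 * m)⁻¹ = φ τ := by field_simp
      have e2 : φ τ * (2 * m) * ((φ τ)⁻¹ + Θs / 2 * τ ^ 3)
          = 2 * m + φ τ * (2 * m) * (Θs / 2 * τ ^ 3) := by
        field_simp
      rw [e1, e2] at big
      nlinarith [big]
    have hsmall : Θs * m * τ ^ 3 ≤ 1 / 8 := by
      have h1 : τ ^ 3 ≤ (1 / (2 * x)) ^ 3 := pow_le_pow_left₀ hτ0 hτle 3
      have h2 : (1 / (2 * x)) ^ 3 = 1 / (8 * (Θs * m)) := by
        rw [div_pow, mul_pow, hx3]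
        norm_num
      rw [h2] at h1
      have := mul_le_mul_of_nonneg_left h1 hΘm.le
      calc Θs * m * τ ^ 3 ≤ Θs * m * (1 / (8 * (Θs * m))) := this
        _ = 1 / 8 := by field_simp
    have hτ3 : 0 ≤ Θs * m * τ ^ 3 := by positivity
    have hD78 : (7:ℝ) / 8 ≤ 1 - Θs * m * τ ^ 3 := by linarith
    have : 2 * m / (1 - Θs * m * τ ^ 3) ≤ 16 * m / 7 := by
      rw [div_le_div_iff₀ (by linarith) (by norm_num)]
      nlinarith
    linarith
end

section
/- Suppose (φ, χ, L) : [0,∞) → ℝ³ is a C¹ solution of the core system with κ > 1: φ' = -3χφ, χ' = -χ² + L - (1/2)Θφ, L' = -χL - (1/2)Θ'φ, where Θ(τ) = √(|λ|/3)τ(1+κτ/2), with initial data φ(0) = 2m > 0, χ(0) = κ, L(0) = (1-κ²)/2. Then L(τ) < 0 for all τ ≥ 0. -/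
open Set Filter Topology Real

/-- First-hit lemma: if `f` is continuous at every `τ ≥ 0`, `f 0 < 0`, and `f` is
nonnegative somewhere on `[0, ∞)`, then there is a first hitting time `τ₀ > 0` with
`f τ₀ = 0` and `f < 0` on `[0, τ₀)`. -/
lemma first_hit {f : ℝ → ℝ} (hc : ∀ τ : ℝ, 0 ≤ τ → ContinuousAt f τ)
    (h0 : f 0 < 0) {τ₁ : ℝ} (hτ₁ : 0 ≤ τ₁) (h1 : 0 ≤ f τ₁) :
    ∃ τ₀ : ℝ, 0 < τ₀ ∧ f τ₀ = 0 ∧ ∀ τ : ℝ, 0 ≤ τ → τ < τ₀ → f τ < 0 := by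
  set g : ℝ → ℝ := fun τ => f (max τ 0) with hg
  have hgc : Continuous g := by
    rw [continuous_iff_continuousAt]
    intro x
    have h1 : ContinuousAt (fun τ : ℝ => max τ 0) x := by fun_prop
    show ContinuousAt (f ∘ fun τ : ℝ => max τ 0) x
    exact ContinuousAt.comp (f := fun τ : ℝ => max τ 0) (hc (max x 0) (le_max_right _ _)) h1
  have hgf : ∀ τ : ℝ, 0 ≤ τ → g τ = f τ := fun τ hτ => by simp [hg, max_eq_left hτ]
  set S : Set ℝ := {τ : ℝ | 0 ≤ τ ∧ 0 ≤ g τ} with hS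
  have hSclosed : IsClosed S := by
    have hSeq : S = Ici 0 ∩ g ⁻¹' (Ici 0) := by
      ext x; simp [hS, mem_Ici]
    rw [hSeq]
    exact isClosed_Ici.inter (isClosed_Ici.preimage hgc)
  have hSne : S.Nonempty := ⟨τ₁, hτ₁, by rwa [hgf τ₁ hτ₁]⟩
  have hSbdd : BddBelow S := ⟨0, fun τ hτ => hτ.1⟩
  set τ₀ := sInf S with hτ₀
  have hτ₀mem : τ₀ ∈ S := hSclosed.csInf_mem hSne hSbdd
  have hτ₀0 : 0 ≤ τ₀ := hτ₀mem.1
  have hge : 0 ≤ f τ₀ := by rw [← hgf τ₀ hτ₀0]; exact hτ₀mem.2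
  have hbefore : ∀ τ : ℝ, 0 ≤ τ → τ < τ₀ → f τ < 0 := by
    intro τ hτ hττ₀
    by_contra h
    push_neg at h
    have : τ₀ ≤ τ := csInf_le hSbdd ⟨hτ, by rwa [hgf τ hτ]⟩
    linarith
  have hτ₀pos : 0 < τ₀ :=
    hτ₀0.lt_of_ne (fun h => by rw [← h] at hge; linarith)
  have hle : f τ₀ ≤ 0 := by
    have htend : Tendsto f (𝓝[<] τ₀) (𝓝 (f τ₀)) :=
      ((hc τ₀ hτ₀0).tendsto).mono_left nhdsWithin_le_nhds
    have hev : ∀ᶠ τ in 𝓝[<] τ₀, f τ ≤ 0 := by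
      filter_upwards [Ioo_mem_nhdsLT_of_mem (show τ₀ ∈ Ioc (0:ℝ) τ₀ from ⟨hτ₀pos, le_rfl⟩)]
        with τ hτ
      exact (hbefore τ hτ.1.le hτ.2).le
    exact le_of_tendsto htend hev
  exact ⟨τ₀, hτ₀pos, le_antisymm hle hge, hbefore⟩

/-- For a global C¹ solution of the core system with `κ > 1`
(`Θ(τ) = √(|λ|/3)τ(1+κτ/2)`, data `φ(0)=2m>0`, `χ(0)=κ`, `L(0)=(1-κ²)/2`),
one has `L(τ) < 0` for all `τ ≥ 0`. -/
theorem core_system_kappa_gt_one_L_negative (m lam κ : ℝ)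
    (hm : 0 < m) (hlam : lam < 0) (hκ : 1 < κ) (φ χ L : ℝ → ℝ)
    (hφ : ∀ τ : ℝ, 0 ≤ τ → HasDerivAt φ (-3 * χ τ * φ τ) τ)
    (hχ : ∀ τ : ℝ, 0 ≤ τ → HasDerivAt χ
      (-(χ τ) ^ 2 + L τ - (Real.sqrt (|lam| / 3) * τ * (1 + κ * τ / 2)) * φ τ / 2) τ)
    (hL : ∀ τ : ℝ, 0 ≤ τ → HasDerivAt L
      (-(χ τ) * L τ - (Real.sqrt (|lam| / 3) * (1 + κ * τ)) * φ τ / 2) τ)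
    (hφ0 : φ 0 = 2 * m) (hχ0 : χ 0 = κ) (hL0 : L 0 = (1 - κ ^ 2) / 2) :
    ∀ τ : ℝ, 0 ≤ τ → L τ < 0 := by
  have hφc : ∀ τ : ℝ, 0 ≤ τ → ContinuousAt φ τ := fun τ hτ => (hφ τ hτ).continuousAt
  have hχc : ∀ τ : ℝ, 0 ≤ τ → ContinuousAt χ τ := fun τ hτ => (hχ τ hτ).continuousAt
  have hLc : ∀ τ : ℝ, 0 ≤ τ → ContinuousAt L τ := fun τ hτ => (hL τ hτ).continuousAt
  -- Positivity of φ on [0, ∞)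
  have hφpos : ∀ τ : ℝ, 0 ≤ τ → 0 < φ τ := by
    by_contra h
    push_neg at h
    obtain ⟨τ₁, hτ₁, hφτ₁⟩ := h
    obtain ⟨τ₀, hτ₀pos, hφτ₀, hbefore⟩ :=
      first_hit (f := fun τ => -φ τ) (fun τ hτ => (hφc τ hτ).neg)
        (by simp [hφ0]; linarith) hτ₁ (by simpa using hφτ₁)
    have hφτ₀' : φ τ₀ = 0 := by simpa [neg_eq_zero] using hφτ₀
    -- reverse time: g s = φ (τ₀ - s)
    set g : ℝ → ℝ := fun s => φ (τ₀ - s) with hgdef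
    have hgderiv : ∀ s ∈ Ico (0:ℝ) τ₀,
        HasDerivAt g (3 * χ (τ₀ - s) * φ (τ₀ - s)) s := by
      intro s hs
      have hts : (0:ℝ) ≤ τ₀ - s := by linarith [hs.2]
      have h1 : HasDerivAt (fun s : ℝ => τ₀ - s) (-1) s := by
        simpa using (hasDerivAt_id s).const_sub τ₀
      have : HasDerivAt (φ ∘ fun s : ℝ => τ₀ - s) (-3 * χ (τ₀ - s) * φ (τ₀ - s) * -1) s :=
        (hφ (τ₀ - s) hts).comp s h1
      convert this using 1
      · rfl
      ring
    -- bound on χ on the compact interval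
    obtain ⟨C, hC⟩ : ∃ C : ℝ, ∀ t ∈ Icc (0:ℝ) τ₀, |χ t| ≤ C := by
      have hcont : ContinuousOn χ (Icc 0 τ₀) := fun t ht =>
        (hχc t ht.1).continuousWithinAt
      obtain ⟨C, hC⟩ := (isCompact_Icc).exists_bound_of_continuousOn hcont
      exact ⟨C, fun t ht => by simpa using hC t ht⟩
    have hgcont : ContinuousOn g (Icc 0 τ₀) := by
      intro s hs
      have hts : (0:ℝ) ≤ τ₀ - s := by linarith [hs.2]
      exact ((hφc (τ₀ - s) hts).comp
        ((continuous_const.sub continuous_id).continuousAt)).continuousWithinAt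
    have hg0 : ‖g 0‖ ≤ 0 := by simp [hgdef, hφτ₀']
    have key := norm_le_gronwallBound_of_norm_deriv_right_le (δ := 0) (K := 3 * C) (ε := 0)
      hgcont (fun s hs => (hgderiv s hs).hasDerivWithinAt) hg0 ?_ τ₀ ⟨hτ₀pos.le, le_rfl⟩
    · rw [gronwallBound_ε0_δ0] at key
      have : g τ₀ = 2 * m := by simp [hgdef, hφ0]
      rw [this] at key
      simp only [Real.norm_eq_abs] at key
      have : |2 * m| = 2 * m := abs_of_pos (by linarith)
      linarith [this ▸ key]
    · intro s hs
      have hts : τ₀ - s ∈ Icc (0:ℝ) τ₀ := ⟨by linarith [hs.2], by linarith [hs.1]⟩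
      have hCb := hC (τ₀ - s) hts
      simp only [Real.norm_eq_abs, hgdef, add_zero]
      rw [abs_mul, abs_mul]
      have h2 : |(3:ℝ)| = 3 := by norm_num
      rw [h2]
      nlinarith [abs_nonneg (φ (τ₀ - s)), abs_nonneg (χ (τ₀ - s))]
  -- Main argument for L
  by_contra h
  push_neg at h
  obtain ⟨τ₁, hτ₁, hLτ₁⟩ := h
  have hL0neg : L 0 < 0 := by
    rw [hL0]
    nlinarith
  obtain ⟨τ₀, hτ₀pos, hLτ₀, hbefore⟩ := first_hit hLc hL0neg hτ₁ hLτ₁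
  -- the derivative of L at τ₀ is negative
  set d : ℝ := -(χ τ₀) * L τ₀ - (Real.sqrt (|lam| / 3) * (1 + κ * τ₀)) * φ τ₀ / 2 with hd
  have hsqrt : 0 < Real.sqrt (|lam| / 3) := by
    apply Real.sqrt_pos.mpr
    have : 0 < |lam| := abs_pos.mpr (ne_of_lt hlam)
    linarith
  have hdneg : d < 0 := by
    rw [hd, hLτ₀]
    have h1 : (0:ℝ) < 1 + κ * τ₀ := by nlinarith
    have h2 : 0 < φ τ₀ := hφpos τ₀ hτ₀pos.le
    have : 0 < Real.sqrt (|lam| / 3) * (1 + κ * τ₀) * φ τ₀ / 2 := by positivity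
    linarith
  have hderiv : HasDerivAt L d τ₀ := hL τ₀ hτ₀pos.le
  have hslope : Tendsto (slope L τ₀) (𝓝[<] τ₀) (𝓝 d) :=
    ((hasDerivAt_iff_tendsto_slope.mp hderiv).mono_left
      (nhdsWithin_mono _ (fun x hx => ne_of_lt hx)))
  have hev1 : ∀ᶠ τ in 𝓝[<] τ₀, slope L τ₀ τ < 0 :=
    hslope.eventually (tendsto_id.eventually_lt_const hdneg)
  have hev2 : ∀ᶠ τ in 𝓝[<] τ₀, τ ∈ Ioo (0:ℝ) τ₀ :=
    Ioo_mem_nhdsLT_of_mem ⟨hτ₀pos, le_rfl⟩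
  obtain ⟨τ, hs, hmem⟩ := (hev1.and hev2).exists
  have hLτneg : L τ < 0 := hbefore τ hmem.1.le hmem.2
  have hslopeval : slope L τ₀ τ = L τ / (τ - τ₀) := by
    rw [slope_def_field, hLτ₀]
    rw [sub_zero]
  rw [hslopeval] at hs
  have hτneg : τ - τ₀ < 0 := by linarith [hmem.2]
  have : 0 < L τ := by
    rcases lt_trichotomy (L τ) 0 with h' | h' | h'
    · exfalso
      have : 0 < L τ / (τ - τ₀) := div_pos_of_neg_of_neg h' hτneg
      linarith
    · exfalso; rw [h'] at hs; simp at hs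
    · exact h'
  linarith
end

section
/- Under the hypotheses of the κ > 1 core system (φ' = -3χφ, χ' = -χ² + L - (1/2)Θφ, L' = -χL - (1/2)Θ'φ, Θ(τ)=√(|λ|/3)τ(1+κτ/2), φ(0)=2m>0, χ(0)=κ>1, L(0)=(1-κ²)/2), any global C¹ solution on [0,∞) satisfies: there exists 0 < τ_χ < ∞ with χ(τ_χ) = 0. -/
open Set

/-- If `f` has nonnegative derivative on `[a,b]`, then `f a ≤ f b`. -/
lemma aux_le_of_deriv_nonneg {f f' : ℝ → ℝ} {a b : ℝ} (hab : a ≤ b)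
    (hf : ∀ x ∈ Set.Icc a b, HasDerivAt f (f' x) x)
    (h0 : ∀ x ∈ Set.Icc a b, 0 ≤ f' x) : f a ≤ f b := by
  have hcont : ContinuousOn f (Set.Icc a b) :=
    fun x hx => (hf x hx).continuousAt.continuousWithinAt
  have hmono : MonotoneOn f (Set.Icc a b) := by
    apply monotoneOn_of_hasDerivWithinAt_nonneg (convex_Icc a b) hcont
      (f' := f')
    · intro x hx
      exact ((hf x (interior_subset hx)).hasDerivWithinAt)
    · intro x hx
      exact h0 x (interior_subset hx)
  exact hmono (Set.left_mem_Icc.2 hab) (Set.right_mem_Icc.2 hab) hab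

/-- If `f` has nonpositive derivative on `[a,b]`, then `f b ≤ f a`. -/
lemma aux_le_of_deriv_nonpos {f f' : ℝ → ℝ} {a b : ℝ} (hab : a ≤ b)
    (hf : ∀ x ∈ Set.Icc a b, HasDerivAt f (f' x) x)
    (h0 : ∀ x ∈ Set.Icc a b, f' x ≤ 0) : f b ≤ f a := by
  have := aux_le_of_deriv_nonneg (f := fun t => -f t) (f' := fun t => -f' t) hab
    (fun x hx => (hf x hx).neg) (fun x hx => neg_nonneg.2 (h0 x hx))
  have h2 : -f a ≤ -f b := this
  linarith

set_option maxHeartbeats 1600000 in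
/-- For a global C¹ solution of the core system with `κ > 1`, the field `χ`
must vanish at some finite positive time. -/
theorem core_system_kappa_gt_one_chi_vanishes (m lam κ : ℝ)
    (hm : 0 < m) (hlam : lam < 0) (hκ : 1 < κ) (φ χ L : ℝ → ℝ)
    (hφ : ∀ τ : ℝ, 0 ≤ τ → HasDerivAt φ (-3 * χ τ * φ τ) τ)
    (hχ : ∀ τ : ℝ, 0 ≤ τ → HasDerivAt χ
      (-(χ τ) ^ 2 + L τ - (Real.sqrt (|lam| / 3) * τ * (1 + κ * τ / 2)) * φ τ / 2) τ)
    (hL : ∀ τ : ℝ, 0 ≤ τ → HasDerivAt L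
      (-(χ τ) * L τ - (Real.sqrt (|lam| / 3) * (1 + κ * τ)) * φ τ / 2) τ)
    (hφ0 : φ 0 = 2 * m) (hχ0 : χ 0 = κ) (hL0 : L 0 = (1 - κ ^ 2) / 2) :
    ∃ τχ : ℝ, 0 < τχ ∧ χ τχ = 0 := by
  by_contra hcon
  push_neg at hcon
  set c := Real.sqrt (|lam| / 3) with hc_def
  have hc : 0 < c := Real.sqrt_pos.2 (by
    have := abs_pos.2 (ne_of_lt hlam); positivity)
  have hc : 0 < c := Real.sqrt_pos.2 (by
    have := abs_pos.2 (ne_of_lt hlam); positivity)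
  have hκ0 : (0:ℝ) < κ := by linarith
  -- continuity of χ on [0,∞)
  have hχcont : ∀ τ : ℝ, 0 ≤ τ → ContinuousAt χ τ :=
    fun τ hτ => (hχ τ hτ).continuousAt
  have hχconOn : ∀ b : ℝ, ContinuousOn χ (Set.Icc 0 b) :=
    fun b x hx => (hχcont x hx.1).continuousWithinAt
  -- Step A : χ is positive on [0,∞)
  have χpos : ∀ τ : ℝ, 0 ≤ τ → 0 < χ τ := by
    intro t ht
    by_contra hneg
    push_neg at hneg
    have ht0 : t ≠ 0 := by
      intro h; rw [h, hχ0] at hneg; linarith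
    have htpos : 0 < t := lt_of_le_of_ne ht (Ne.symm ht0)
    have hχt_ne : χ t ≠ 0 := hcon t htpos
    have hχt_neg : χ t < 0 := lt_of_le_of_ne hneg hχt_ne
    have hsub : Set.Icc (χ t) (χ 0) ⊆ χ '' Set.Icc 0 t :=
      intermediate_value_Icc' (le_of_lt htpos) (hχconOn t)
    have h0mem : (0:ℝ) ∈ Set.Icc (χ t) (χ 0) := by
      refine ⟨hneg, ?_⟩; rw [hχ0]; linarith
    obtain ⟨s, hs, hχs⟩ := hsub h0mem
    have hs0 : s ≠ 0 := by
      intro h; rw [h, hχ0] at hχs; linarith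
    exact hcon s (lt_of_le_of_ne hs.1 (Ne.symm hs0)) hχs
  -- a continuous extension of χ and its primitive
  set χt : ℝ → ℝ := fun t => χ (max t 0) with hχt_def
  have hχt_cont : Continuous χt := by
    rw [continuous_iff_continuousAt]
    intro x
    have hg : Continuous (fun y : ℝ => max y 0) := continuous_id.max continuous_const
    have : ContinuousAt (χ ∘ fun y : ℝ => max y 0) x :=
      ContinuousAt.comp (hχcont _ (le_max_right x 0)) hg.continuousAt
    exact this
  have hχt_eq : ∀ t : ℝ, 0 ≤ t → χt t = χ t := by
    intro t ht; simp [hχt_def, max_eq_left ht]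
  set I : ℝ → ℝ := fun t => ∫ s in (0:ℝ)..t, χt s with hI_def
  have hI : ∀ t : ℝ, HasDerivAt I (χt t) t := by
    intro t
    exact intervalIntegral.integral_hasDerivAt_right
      (hχt_cont.intervalIntegrable 0 t)
      (hχt_cont.stronglyMeasurable.stronglyMeasurableAtFilter)
      hχt_cont.continuousAt
  have hI0 : I 0 = 0 := by simp [hI_def]
  -- Step B : φ is positive on [0,∞)
  have φval : ∀ b : ℝ, 0 ≤ b → φ b * Real.exp (3 * I b) = 2 * m := by
    intro b hb
    have key : ∀ x ∈ Set.Icc (0:ℝ) b,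
        HasDerivAt (fun t => φ t * Real.exp (3 * I t)) 0 x := by
      intro x hx
      have h1 : HasDerivAt (fun t => Real.exp (3 * I t))
          (Real.exp (3 * I x) * (3 * χ x)) x := by
        have := ((hI x).const_mul 3).exp
        rwa [hχt_eq x hx.1] at this
      have : HasDerivAt (fun t => φ t * Real.exp (3 * I t))
          (-3 * χ x * φ x * Real.exp (3 * I x) + φ x * (Real.exp (3 * I x) * (3 * χ x))) x :=
        (hφ x hx.1).fun_mul h1
      convert this using 1
      ring
    have h2 : φ b * Real.exp (3 * I b) = φ 0 * Real.exp (3 * I 0) :=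
      constant_of_has_deriv_right_zero
        (f := fun t => φ t * Real.exp (3 * I t)) (a := 0) (b := b)
        (fun x hx => (key x hx).continuousAt.continuousWithinAt)
        (fun x hx => ((key x (Set.mem_Icc_of_Ico hx)).hasDerivWithinAt))
        b (Set.right_mem_Icc.2 hb)
    rw [h2, hI0, hφ0]; simp
  have φpos : ∀ b : ℝ, 0 ≤ b → 0 < φ b := by
    intro b hb
    have h := φval b hb
    have he := Real.exp_pos (3 * I b)
    nlinarith
  -- Step C : L is negative on [0,∞)
  have Lneg : ∀ b : ℝ, 0 ≤ b → L b < 0 := by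
    intro b hb
    have key : ∀ x ∈ Set.Icc (0:ℝ) b,
        HasDerivAt (fun t => L t * Real.exp (I t))
          ((-(c * (1 + κ * x)) * φ x / 2) * Real.exp (I x)) x := by
      intro x hx
      have h1 : HasDerivAt (fun t => Real.exp (I t))
          (Real.exp (I x) * χ x) x := by
        have := (hI x).exp
        rwa [hχt_eq x hx.1] at this
      have : HasDerivAt (fun t => L t * Real.exp (I t))
          ((-χ x * L x - c * (1 + κ * x) * φ x / 2) * Real.exp (I x) + L x * (Real.exp (I x) * χ x)) x :=
        (hL x hx.1).fun_mul h1
      convert this using 1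
      ring
    have hle : L b * Real.exp (I b) ≤ L 0 * Real.exp (I 0) := by
      apply aux_le_of_deriv_nonpos hb key
      intro x hx
      have hφx := φpos x hx.1
      have h1 : 0 < 1 + κ * x := by nlinarith [hx.1]
      have : 0 < (c * (1 + κ * x)) * φ x / 2 := by positivity
      nlinarith [Real.exp_pos (I x)]
    rw [hI0, hL0] at hle
    simp only [Real.exp_zero, mul_one] at hle
    have hL0neg : (1 - κ ^ 2) / 2 < 0 := by nlinarith
    nlinarith [Real.exp_pos (I b)]
  -- Step D : χ b * (b + 1/κ) ≤ 1 on [0,∞)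
  have χbound : ∀ b : ℝ, 0 ≤ b → χ b * (b + 1/κ) ≤ 1 := by
    intro b hb
    have key : ∀ x ∈ Set.Icc (0:ℝ) b,
        HasDerivAt (fun t => (χ t)⁻¹ - t)
          (-(-(χ x) ^ 2 + L x - (c * x * (1 + κ * x / 2)) * φ x / 2) / (χ x)^2 - 1)
          x := by
      intro x hx
      exact ((hχ x hx.1).inv (ne_of_gt (χpos x hx.1))).sub (hasDerivAt_id x)
    have hle : (χ 0)⁻¹ - 0 ≤ (χ b)⁻¹ - b := by
      apply aux_le_of_deriv_nonneg hb key
      intro x hx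
      have hχx := χpos x hx.1
      have hLx := Lneg x hx.1
      have hφx := φpos x hx.1
      have hΘ : 0 ≤ (c * x * (1 + κ * x / 2)) * φ x / 2 := by
        have h1 : 0 ≤ 1 + κ * x / 2 := by nlinarith [hx.1]
        have hx1 := hx.1
        positivity
      have hsq : 0 < (χ x)^2 := by positivity
      have h1 : 1 ≤ -(-(χ x) ^ 2 + L x - (c * x * (1 + κ * x / 2)) * φ x / 2) / (χ x)^2 := by
        rw [le_div_iff₀ hsq]; nlinarith
      linarith
    rw [hχ0] at hle
    have hχb := χpos b hb
    have h2 : b + 1/κ ≤ (χ b)⁻¹ := by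
      have : (0:ℝ) < κ := hκ0
      rw [sub_zero] at hle
      calc b + 1/κ = κ⁻¹ + b := by rw [one_div]; ring
        _ ≤ (χ b)⁻¹ := by linarith
    calc χ b * (b + 1/κ) ≤ χ b * (χ b)⁻¹ :=
          mul_le_mul_of_nonneg_left h2 (le_of_lt hχb)
      _ = 1 := mul_inv_cancel₀ (ne_of_gt hχb)
  -- Step E : lower bound for φ
  have φlow : ∀ b : ℝ, 0 ≤ b → 2 * m / κ^3 ≤ φ b * (b + 1/κ)^3 := by
    intro b hb
    have key : ∀ x ∈ Set.Icc (0:ℝ) b,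
        HasDerivAt (fun t => φ t * (t + 1/κ)^3)
          ((-3 * χ x * φ x) * (x + 1/κ)^3 + φ x * (3 * (x + 1/κ)^2 * 1)) x := by
      intro x hx
      exact (hφ x hx.1).mul (((hasDerivAt_id x).add_const (1/κ)).pow 3)
    have heq : φ 0 * (0 + 1/κ)^3 = 2 * m / κ^3 := by
      rw [hφ0]; field_simp; ring
    have hle : φ 0 * (0 + 1/κ)^3 ≤ φ b * (b + 1/κ)^3 := aux_le_of_deriv_nonneg hb key ?_
    · linarith
    · intro x hx
      have hφx := φpos x hx.1
      have hχx := χpos x hx.1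
      have hb1 := χbound x hx.1
      have hxk : 0 < x + 1/κ := by
        have : (0:ℝ) < 1/κ := by positivity
        linarith [hx.1]
      have : (-3 * χ x * φ x) * (x + 1/κ)^3 + φ x * (3 * (x + 1/κ)^2 * 1)
          = 3 * φ x * (x + 1/κ)^2 * (1 - χ x * (x + 1/κ)) := by ring
      rw [this]
      have : 0 ≤ 1 - χ x * (x + 1/κ) := by linarith
      positivity
  -- Step F : final contradiction via logarithmic divergence
  set A : ℝ := c * m / (16 * κ^2) with hA_def
  have hA : 0 < A := by positivity
  set t₀ : ℝ := 1/κ with ht₀_def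
  have ht₀ : 0 < t₀ := by positivity
  set T : ℝ := t₀ * Real.exp ((χ t₀ + 1) / A) with hT_def
  have hχt₀ : 0 < χ t₀ := χpos t₀ (le_of_lt ht₀)
  have hexp1 : 1 ≤ Real.exp ((χ t₀ + 1) / A) := by
    rw [Real.one_le_exp_iff]
    positivity
  have hTt₀ : t₀ ≤ T := by
    calc t₀ = t₀ * 1 := by ring
      _ ≤ T := by rw [hT_def]; exact mul_le_mul_of_nonneg_left hexp1 (le_of_lt ht₀)
  have hT0 : 0 < T := lt_of_lt_of_le ht₀ hTt₀
  -- On [t₀, T] : χ' x ≤ -A/x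
  have key : ∀ x ∈ Set.Icc t₀ T,
      HasDerivAt (fun t => χ t + A * Real.log t)
        ((-(χ x) ^ 2 + L x - (c * x * (1 + κ * x / 2)) * φ x / 2) + A * x⁻¹) x := by
    intro x hx
    have hx0 : 0 < x := lt_of_lt_of_le ht₀ hx.1
    exact (hχ x (le_of_lt hx0)).add ((Real.hasDerivAt_log (ne_of_gt hx0)).const_mul A)
  have hGle : χ T + A * Real.log T ≤ χ t₀ + A * Real.log t₀ := by
    apply aux_le_of_deriv_nonpos hTt₀ key
    intro x hx
    have hx0 : 0 < x := lt_of_lt_of_le ht₀ hx.1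
    have hxge : t₀ ≤ x := hx.1
    have hφx := φpos x (le_of_lt hx0)
    have hχx := χpos x (le_of_lt hx0)
    have hLx := Lneg x (le_of_lt hx0)
    -- φ x ≥ m / (4 κ³ x³) since (x + 1/κ)³ ≤ 8 x³
    have hcube : (x + 1/κ)^3 ≤ 8 * x^3 := by
      have h1 : x + 1/κ ≤ 2 * x := by rw [ht₀_def] at hxge; linarith
      have h2 : 0 ≤ x + 1/κ := by positivity
      calc (x + 1/κ)^3 ≤ (2*x)^3 := pow_le_pow_left₀ h2 h1 3
        _ = 8 * x^3 := by ring
    have hφlow := φlow x (le_of_lt hx0)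
    have hφx2 : m / (4 * κ^3 * x^3) ≤ φ x := by
      have h8 : 0 < 8 * x^3 := by positivity
      have h2 : φ x * (x + 1/κ)^3 ≤ φ x * (8 * x^3) :=
        mul_le_mul_of_nonneg_left hcube (le_of_lt hφx)
      have h3 : 2 * m / κ^3 ≤ φ x * (8 * x^3) := le_trans hφlow h2
      rw [div_le_iff₀ (by positivity)]
      have hκ3 : (0:ℝ) < κ^3 := by positivity
      rw [div_le_iff₀ hκ3] at h3
      nlinarith
    -- Θ x ≥ c κ x² / 2
    have hΘlow : c * (κ * x^2 / 2) ≤ c * x * (1 + κ * x / 2) := by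
      have hxx : x * (1 + κ * x / 2) = x + κ * x^2 / 2 := by ring
      have : κ * x^2 / 2 ≤ x * (1 + κ * x / 2) := by rw [hxx]; linarith
      calc c * (κ * x^2 / 2) ≤ c * (x * (1 + κ * x / 2)) :=
            mul_le_mul_of_nonneg_left this (le_of_lt hc)
        _ = c * x * (1 + κ * x / 2) := by ring
    -- hence Θ x * φ x / 2 ≥ A / x
    have hmain : A * x⁻¹ ≤ (c * x * (1 + κ * x / 2)) * φ x / 2 := by
      have h1 : (c * (κ * x^2 / 2)) * (m / (4 * κ^3 * x^3)) / 2
          ≤ (c * x * (1 + κ * x / 2)) * φ x / 2 := by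
        have hΘpos : 0 ≤ c * (κ * x^2 / 2) := by positivity
        have := mul_le_mul hΘlow hφx2 (by positivity) (by positivity : (0:ℝ) ≤ c * x * (1 + κ * x / 2))
        linarith
      have h2 : (c * (κ * x^2 / 2)) * (m / (4 * κ^3 * x^3)) / 2 = A * x⁻¹ := by
        rw [hA_def]
        field_simp
        ring
      rw [← h2]
      exact h1
    nlinarith [sq_nonneg (χ x)]
  -- conclude
  have hlogT : Real.log T = Real.log t₀ + (χ t₀ + 1) / A := by
    rw [hT_def, Real.log_mul (ne_of_gt ht₀) (ne_of_gt (Real.exp_pos _)), Real.log_exp]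
  rw [hlogT] at hGle
  have : χ T ≤ -1 := by
    have hAe : A * ((χ t₀ + 1) / A) = χ t₀ + 1 := by
      field_simp
    nlinarith [hGle]
  have := χpos T (le_of_lt hT0)
  linarith
end

section
/- Let Θ̇⋆ > 0 and let φ : [0,T] → ℝ be continuous with φ(τ) > -τ for τ ≥ 0. Suppose L̄ : [0,T'] → ℝ (T' ≤ T) is a C¹ solution of L̄' = -τL̄² + Θ̇⋆φ with L̄(0) = -1/2. Then L̄(τ) ≥ -√(Θ̇⋆)·tan((1/2)√(Θ̇⋆)τ² + arctan(1/(2√(Θ̇⋆)))) for all τ in [0,T'] for which the argument of tan lies in [0, π/2). -/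
/-- Lower bound for the supplementary system in the `κ = 0` gauge:
if `L̄' = -τL̄² + Θ̇⋆φ` with `L̄(0) = -1/2` and `φ(τ) > -τ`, then
`L̄(τ) ≥ -√Θ̇⋆ tan(√Θ̇⋆ τ²/2 + arctan(1/(2√Θ̇⋆)))` wherever the argument
of `tan` lies in `[0, π/2)`. -/
theorem supplementary_system_lower_bound (Θs T T' : ℝ) (hΘs : 0 < Θs)
    (hT' : T' ≤ T) (hT'0 : 0 ≤ T') (φ Lb : ℝ → ℝ)
    (hφc : ContinuousOn φ (Set.Icc 0 T))
    (hφgt : ∀ τ ∈ Set.Icc (0 : ℝ) T, φ τ > -τ)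
    (hLb : ∀ τ ∈ Set.Icc (0 : ℝ) T',
      HasDerivAt Lb (-τ * (Lb τ) ^ 2 + Θs * φ τ) τ)
    (hLb0 : Lb 0 = -(1 / 2)) :
    ∀ τ ∈ Set.Icc (0 : ℝ) T',
      (1 / 2) * Real.sqrt Θs * τ ^ 2 + Real.arctan (1 / (2 * Real.sqrt Θs))
          < Real.pi / 2 →
      Lb τ ≥ -Real.sqrt Θs *
        Real.tan ((1 / 2) * Real.sqrt Θs * τ ^ 2 +
          Real.arctan (1 / (2 * Real.sqrt Θs))) := by
  intro τ0 hτ0 harg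
  set s := Real.sqrt Θs with hs_def
  have hs : 0 < s := Real.sqrt_pos.mpr hΘs
  have hs2 : s ^ 2 = Θs := Real.sq_sqrt hΘs.le
  set a := Real.arctan (1 / (2 * s)) with ha_def
  set u : ℝ → ℝ := fun x => (1 / 2) * s * x ^ 2 + a with hu_def
  set g : ℝ → ℝ := fun x => -s * Real.tan (u x) with hg_def
  obtain ⟨hτ00, hτ0T'⟩ := hτ0
  -- range of u on [0, τ0]
  have hurange : ∀ x ∈ Set.Icc (0 : ℝ) τ0, -(Real.pi / 2) < u x ∧ u x < Real.pi / 2 := by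
    intro x hx
    obtain ⟨hx0, hxτ⟩ := hx
    have h1 : u x ≤ u τ0 := by
      simp only [hu_def]
      have : x ^ 2 ≤ τ0 ^ 2 := by nlinarith
      nlinarith
    constructor
    · have := Real.neg_pi_div_two_lt_arctan (1 / (2 * s))
      simp only [hu_def]
      nlinarith
    · exact lt_of_le_of_lt h1 harg
  have hcos : ∀ x ∈ Set.Icc (0 : ℝ) τ0, Real.cos (u x) ≠ 0 := by
    intro x hx
    obtain ⟨h1, h2⟩ := hurange x hx
    exact (Real.cos_pos_of_mem_Ioo ⟨h1, h2⟩).ne'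
  -- derivative of u
  have hu' : ∀ x : ℝ, HasDerivAt u (s * x) x := by
    intro x
    have : HasDerivAt (fun x : ℝ => (1 / 2) * s * x ^ 2 + a) ((1 / 2) * s * (2 * x) + 0) x := by
      exact (((hasDerivAt_pow 2 x).const_mul ((1 / 2) * s)).add_const a).congr_deriv (by ring)
    simpa only [hu_def] using this.congr_deriv (by ring)
  -- derivative of g
  have hg' : ∀ x ∈ Set.Icc (0 : ℝ) τ0,
      HasDerivAt g (-x * (g x) ^ 2 - Θs * x) x := by
    intro x hx
    have hc := hcos x hx
    have htan : HasDerivAt (fun y => Real.tan (u y)) (1 / Real.cos (u x) ^ 2 * (s * x)) x :=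
      (Real.hasDerivAt_tan hc).comp x (hu' x)
    have h := htan.const_mul (-s)
    have hkey : -s * (1 / Real.cos (u x) ^ 2 * (s * x)) = -x * (g x) ^ 2 - Θs * x := by
      have hco : (1 + Real.tan (u x) ^ 2)⁻¹ = Real.cos (u x) ^ 2 :=
        Real.inv_one_add_tan_sq hc
      have hcpos : (0:ℝ) < Real.cos (u x) ^ 2 := by positivity
      have hrw : 1 / Real.cos (u x) ^ 2 = 1 + Real.tan (u x) ^ 2 := by
        rw [← hco]
        field_simp
      rw [hrw]
      simp only [hg_def]
      linear_combination (-x) * hs2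
    simpa only [hg_def, hkey] using h
  -- apply fencing theorem on [0, τ0]
  have hsub : Set.Icc (0 : ℝ) τ0 ⊆ Set.Icc (0 : ℝ) T' := Set.Icc_subset_Icc le_rfl hτ0T'
  have hsubT : Set.Icc (0 : ℝ) τ0 ⊆ Set.Icc (0 : ℝ) T :=
    Set.Icc_subset_Icc le_rfl (hτ0T'.trans hT')
  have hgc : ContinuousOn g (Set.Icc 0 τ0) := fun x hx =>
    ((hg' x hx).continuousAt).continuousWithinAt
  have hLc : ContinuousOn Lb (Set.Icc 0 τ0) := fun x hx =>
    ((hLb x (hsub hx)).continuousAt).continuousWithinAt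
  have hg0 : g 0 = -(1 / 2) := by
    simp only [hg_def, hu_def, ha_def]
    rw [show (1:ℝ) / 2 * s * 0 ^ 2 + Real.arctan (1 / (2 * s)) = Real.arctan (1 / (2 * s)) by
      ring, Real.tan_arctan]
    field_simp
  have key : ∀ ⦃x⦄, x ∈ Set.Icc (0 : ℝ) τ0 → g x ≤ Lb x := by
    refine image_le_of_deriv_right_lt_deriv_boundary' hgc
      (fun x hx => ((hg' x (Set.mem_Icc_of_Ico hx)).hasDerivWithinAt)) ?_ hLc
      (fun x hx => ((hLb x (hsub (Set.mem_Icc_of_Ico hx))).hasDerivWithinAt)) ?_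
    · rw [hg0, hLb0]
    · intro x hx heq
      have hx' : x ∈ Set.Icc (0 : ℝ) τ0 := Set.mem_Icc_of_Ico hx
      have hφx := hφgt x (hsubT hx')
      have hx0 : 0 ≤ x := hx.1
      have : -x * (g x) ^ 2 - Θs * x < -x * (Lb x) ^ 2 + Θs * φ x := by
        rw [heq]
        nlinarith
      exact this
  have := key (Set.mem_Icc.mpr ⟨hτ00, le_rfl⟩)
  simpa only [hg_def, hu_def, ha_def, ge_iff_le] using this
end

section
/- For m > 0 and λ < 0, the function W(r) = H(r)^{1/√3} with H(r) = (√(3r) + √(r+6m))/((√(3r) - √(r+6m))(√r + √(r+6m))^{2√3}) satisfies: W(r)·(r-3m)^{1/√3} tends to a finite nonzero limit as r → 3m⁺; equivalently, W(r) diverges like (r-3m)^{-1/√3} as r → 3m from above. -/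
open Real Filter Set

/-- In the extremal Schwarzschild-de Sitter spacetime, with
`H(r) = (√(3r)+√(r+6m)) / ((√(3r)-√(r+6m))(√r+√(r+6m))^{2√3})`,
the function `W(r) = H(r)^{1/√3}` satisfies: `W(r)·(r-3m)^{1/√3}` tends to a
finite nonzero limit as `r → 3m⁺`. -/
theorem extremal_SdS_W_blowup_rate (m lam : ℝ) (hm : 0 < m) (hlam : lam < 0) :
    ∃ c : ℝ, c ≠ 0 ∧
      Filter.Tendsto
        (fun r : ℝ =>
          ((Real.sqrt (3 * r) + Real.sqrt (r + 6 * m)) /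
              ((Real.sqrt (3 * r) - Real.sqrt (r + 6 * m)) *
                (Real.sqrt r + Real.sqrt (r + 6 * m)) ^ (2 * Real.sqrt 3)))
              ^ ((1 : ℝ) / Real.sqrt 3) *
            (r - 3 * m) ^ ((1 : ℝ) / Real.sqrt 3))
        (nhdsWithin (3 * m) (Set.Ioi (3 * m))) (nhds c) := by
  set p : ℝ := (1 : ℝ) / Real.sqrt 3 with hp
  set g : ℝ → ℝ := fun r =>
    (Real.sqrt (3 * r) + Real.sqrt (r + 6 * m)) ^ 2 /
      (2 * (Real.sqrt r + Real.sqrt (r + 6 * m)) ^ (2 * Real.sqrt 3)) with hgdef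
  have hL : 0 < g (3 * m) := by
    simp only [hgdef]
    have h1 : 0 < Real.sqrt (3 * (3 * m)) := Real.sqrt_pos.2 (by linarith)
    have h2 : 0 < Real.sqrt (3 * m + 6 * m) := Real.sqrt_pos.2 (by linarith)
    have h3 : 0 < Real.sqrt (3 * m) := Real.sqrt_pos.2 (by linarith)
    positivity
  refine ⟨g (3 * m) ^ p, ne_of_gt (Real.rpow_pos_of_pos hL p), ?_⟩
  -- continuity of g at 3*m
  have hin : ContinuousAt (fun r : ℝ => Real.sqrt r + Real.sqrt (r + 6 * m)) (3 * m) := by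
    fun_prop
  have hbase : 0 < Real.sqrt (3 * m) + Real.sqrt (3 * m + 6 * m) := by
    have h3 : 0 < Real.sqrt (3 * m) := Real.sqrt_pos.2 (by linarith)
    have h2 : 0 ≤ Real.sqrt (3 * m + 6 * m) := Real.sqrt_nonneg _
    linarith
  have hden : ContinuousAt
      (fun r : ℝ => (Real.sqrt r + Real.sqrt (r + 6 * m)) ^ (2 * Real.sqrt 3)) (3 * m) :=
    hin.rpow_const (Or.inl (ne_of_gt hbase))
  have hnum : ContinuousAt
      (fun r : ℝ => (Real.sqrt (3 * r) + Real.sqrt (r + 6 * m)) ^ 2) (3 * m) := by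
    fun_prop
  have hdenne : (2 : ℝ) * (Real.sqrt (3 * m) + Real.sqrt (3 * m + 6 * m)) ^ (2 * Real.sqrt 3) ≠ 0 := by
    have := Real.rpow_pos_of_pos hbase (2 * Real.sqrt 3)
    positivity
  have hg : ContinuousAt g (3 * m) := hnum.div (continuousAt_const.mul hden) hdenne
  have hgt : Filter.Tendsto g (nhdsWithin (3 * m) (Set.Ioi (3 * m))) (nhds (g (3 * m))) :=
    hg.continuousWithinAt.tendsto
  have htend : Filter.Tendsto (fun r => g r ^ p)
      (nhdsWithin (3 * m) (Set.Ioi (3 * m))) (nhds (g (3 * m) ^ p)) :=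
    ((Real.continuousAt_rpow_const _ p (Or.inl (ne_of_gt hL))).tendsto).comp hgt
  refine htend.congr' ?_
  filter_upwards [self_mem_nhdsWithin] with r hr
  have hr3 : 3 * m < r := hr
  have hr0 : 0 < r := by linarith
  set a := Real.sqrt (3 * r)
  set b := Real.sqrt (r + 6 * m)
  set s := Real.sqrt r
  have ha : a ^ 2 = 3 * r := Real.sq_sqrt (by linarith)
  have hb : b ^ 2 = r + 6 * m := Real.sq_sqrt (by linarith)
  have hblt : b < a := Real.sqrt_lt_sqrt (by linarith) (by linarith)
  have hbpos : 0 < b := Real.sqrt_pos.2 (by linarith)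
  have hspos : 0 < s := Real.sqrt_pos.2 hr0
  have hcpos : 0 < (s + b) ^ (2 * Real.sqrt 3) := Real.rpow_pos_of_pos (by linarith) _
  have hHpos : 0 < (a + b) / ((a - b) * (s + b) ^ (2 * Real.sqrt 3)) := by
    apply div_pos (by linarith)
    exact mul_pos (by linarith) hcpos
  have hkey : (a - b) * (a + b) = 2 * (r - 3 * m) := by
    have : (a - b) * (a + b) = a ^ 2 - b ^ 2 := by ring
    rw [this, ha, hb]; ring
  have hbase_eq : (a + b) / ((a - b) * (s + b) ^ (2 * Real.sqrt 3)) * (r - 3 * m) = g r := by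
    show _ = (a + b) ^ 2 / (2 * (s + b) ^ (2 * Real.sqrt 3))
    have hane : a - b ≠ 0 := by linarith
    have hcne : (s + b) ^ (2 * Real.sqrt 3) ≠ 0 := ne_of_gt hcpos
    field_simp
    linear_combination (-(a + b)) * hkey
  symm
  calc ((a + b) / ((a - b) * (s + b) ^ (2 * Real.sqrt 3))) ^ p * (r - 3 * m) ^ p
      = ((a + b) / ((a - b) * (s + b) ^ (2 * Real.sqrt 3)) * (r - 3 * m)) ^ p := by
        rw [← Real.mul_rpow hHpos.le (by linarith)]
    _ = g r ^ p := by rw [hbase_eq]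
end
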